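/- Every integer point of Q_P other than the origin is of the form ρ(e) for some edge e of P̂; consequently the set of integer points of Q_P is {0} ∪ {ρ(e) : e an edge of P̂}. -/

import Mathlib

open scoped Classical

/-- The poset `P̂ = P ∪ {0̂, 1̂}`: `none` is the minimum `y₀ = 0̂`,
`some none` is the maximum `y_{d+1} = 1̂`, and `some (some i)` is `y_{i+1} ∈ P`. -/
abbrev HatP (d : ℕ) := Option (Option (Fin d))

def hatBot (d : ℕ) : HatP d := none

def hatTop (d : ℕ) : HatP d := some none

/-- The order of `P̂` induced by a partial order `P` on `Fin d`. -/
def hatLE {d : ℕ} (P : PartialOrder (Fin d)) : HatP d → HatP d → Prop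
  | none, _ => True
  | some _, none => False
  | some none, some none => True
  | some none, some (some _) => False
  | some (some _), some none => True
  | some (some a), some (some b) => P.le a b

def hatLT {d : ℕ} (P : PartialOrder (Fin d)) (a b : HatP d) : Prop :=
  hatLE P a b ∧ a ≠ b

/-- `b` covers `a` in `P̂`. -/
def IsCover {d : ℕ} (P : PartialOrder (Fin d)) (a b : HatP d) : Prop :=
  hatLT P a b ∧ ∀ z, ¬ (hatLT P a z ∧ hatLT P z b)

/-- `{a, b}` is an edge of the Hasse diagram of `P̂` (undirected). -/
def IsEdge {d : ℕ} (P : PartialOrder (Fin d)) (a b : HatP d) : Prop :=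
  IsCover P a b ∨ IsCover P b a

/-- `chi y = e_i` if `y = y_i ∈ P`, and `0` if `y ∈ {0̂, 1̂}`. -/
def chi {d : ℕ} : HatP d → (Fin d → ℝ)
  | some (some i) => fun k => if k = i then 1 else 0
  | _ => 0

/-- `ρ(e)` for the edge `e = {a, b}` with `a < b`. -/
def rho {d : ℕ} (a b : HatP d) : Fin d → ℝ := chi a - chi b

/-- `ρ(e)` for an unordered edge `{a, b}`. -/
noncomputable def rhoE {d : ℕ} (P : PartialOrder (Fin d)) (a b : HatP d) : Fin d → ℝ :=
  if hatLT P a b then rho a b else rho b a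

/-- The set `{ρ(e) : e an edge of P̂}`. -/
def edgeVecs {d : ℕ} (P : PartialOrder (Fin d)) : Set (Fin d → ℝ) :=
  {v | ∃ a b, IsCover P a b ∧ v = rho a b}

/-- The polytope `Q_P`, convex hull of `{ρ(e) : e an edge of P̂}`. -/
def QPoly {d : ℕ} (P : PartialOrder (Fin d)) : Set (Fin d → ℝ) :=
  convexHull ℝ (edgeVecs P)

/-- A point of `ℝ^d` all of whose coordinates are integers. -/
def IsIntegralPt {d : ℕ} (x : Fin d → ℝ) : Prop := ∀ k, ∃ z : ℤ, x k = (z : ℝ)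

/-- A facet of a polytope: an exposed face of dimension `d - 1`. -/
def IsFacet {d : ℕ} (Q F : Set (Fin d → ℝ)) : Prop :=
  IsExposed ℝ Q F ∧ Module.finrank ℝ ↥(vectorSpan ℝ F) = d - 1

/-- A cycle `(c 0, c 1, …, c m)` in (the Hasse diagram of) `P̂`;
indices are cyclic in `Fin (m+1)`. -/
def IsCycle {d : ℕ} (P : PartialOrder (Fin d)) {m : ℕ} (c : Fin (m + 1) → HatP d) : Prop :=
  2 ≤ m ∧ Function.Injective c ∧ ∀ j, IsEdge P (c j) (c (j + 1))

/-- A cycle is special if it has as many ascending steps as descending steps. -/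
def CycleSpecial {d : ℕ} (P : PartialOrder (Fin d)) {m : ℕ} (c : Fin (m + 1) → HatP d) : Prop :=
  Nat.card {j : Fin (m + 1) // hatLT P (c j) (c (j + 1))} =
    Nat.card {j : Fin (m + 1) // hatLT P (c (j + 1)) (c j)}

/-- A very special cycle: special, and not containing both `0̂` and `1̂`. -/
def VerySpecialCycle {d : ℕ} (P : PartialOrder (Fin d)) {m : ℕ}
    (c : Fin (m + 1) → HatP d) : Prop :=
  IsCycle P c ∧ CycleSpecial P c ∧
    ¬ (hatBot d ∈ Set.range c ∧ hatTop d ∈ Set.range c)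

/-- A path `(c 0, c 1, …, c m)` in (the Hasse diagram of) `P̂`. -/
def IsPath {d : ℕ} (P : PartialOrder (Fin d)) {m : ℕ} (c : Fin (m + 1) → HatP d) : Prop :=
  Function.Injective c ∧ ∀ j : Fin m, IsEdge P (c j.castSucc) (c j.succ)

/-- A path is special if it has as many ascending steps as descending steps. -/
def PathSpecial {d : ℕ} (P : PartialOrder (Fin d)) {m : ℕ} (c : Fin (m + 1) → HatP d) : Prop :=
  Nat.card {j : Fin m // hatLT P (c j.castSucc) (c j.succ)} =
    Nat.card {j : Fin m // hatLT P (c j.succ) (c j.castSucc)}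

/-- `μ` is the level function of a special cycle `c`. -/
def IsMuCycle {d : ℕ} (P : PartialOrder (Fin d)) {m : ℕ} (c : Fin (m + 1) → HatP d)
    (μ : Fin (m + 1) → ℕ) : Prop :=
  (∀ j, (hatLT P (c j) (c (j + 1)) → μ (j + 1) = μ j + 1) ∧
        (hatLT P (c (j + 1)) (c j) → μ j = μ (j + 1) + 1)) ∧
  ∃ j, μ j = 0

/-- `μ` is the level function of a special path `c`. -/
def IsMuPath {d : ℕ} (P : PartialOrder (Fin d)) {m : ℕ} (c : Fin (m + 1) → HatP d)
    (μ : Fin (m + 1) → ℕ) : Prop :=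
  (∀ j : Fin m, (hatLT P (c j.castSucc) (c j.succ) → μ j.succ = μ j.castSucc + 1) ∧
        (hatLT P (c j.succ) (c j.castSucc) → μ j.castSucc = μ j.succ + 1)) ∧
  ∃ j, μ j = 0

/-- The distance `dist_{P̂}(y, z)`: the smallest `s` for which there is a saturated
chain `y = z_0 < z_1 < ⋯ < z_s = z` in `P̂`. -/
noncomputable def hatDist {d : ℕ} (P : PartialOrder (Fin d)) (y z : HatP d) : ℕ :=
  sInf {s | ∃ c : Fin (s + 1) → HatP d, c 0 = y ∧ c (Fin.last s) = z ∧
    ∀ j : Fin s, IsCover P (c j.castSucc) (c j.succ)}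

/-- `P̂` has a very special cycle satisfying the inequalities (1) and (2). -/
def HasBadCycle {d : ℕ} (P : PartialOrder (Fin d)) : Prop :=
  ∃ (m : ℕ) (c : Fin (m + 1) → HatP d) (μ : Fin (m + 1) → ℕ),
    VerySpecialCycle P c ∧ IsMuCycle P c μ ∧
    (∀ a b, hatLT P (c b) (c a) →
      (μ a : ℤ) - (μ b : ℤ) ≤ (hatDist P (c b) (c a) : ℤ)) ∧
    (∀ a b, (μ a : ℤ) - (μ b : ℤ) ≤
      (hatDist P (hatBot d) (c a) : ℤ) + (hatDist P (c b) (hatTop d) : ℤ))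

/-- `P̂` has a special path from `0̂` to `1̂` satisfying the inequality (3). -/
def HasBadPath {d : ℕ} (P : PartialOrder (Fin d)) : Prop :=
  ∃ (m : ℕ) (c : Fin (m + 1) → HatP d) (μ : Fin (m + 1) → ℕ),
    IsPath P c ∧ PathSpecial P c ∧ c 0 = hatBot d ∧ c (Fin.last m) = hatTop d ∧
    IsMuPath P c μ ∧
    (∀ a b, hatLT P (c b) (c a) →
      (μ a : ℤ) - (μ b : ℤ) ≤ (hatDist P (c b) (c a) : ℤ))

/-- A polytope is simplicial (ℚ-factorial) if each of its proper faces is a simplex. -/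
def SimplicialPoly {d : ℕ} (Q : Set (Fin d → ℝ)) : Prop :=
  ∀ F : Set (Fin d → ℝ), IsExposed ℝ Q F → F ≠ Q →
    AffineIndependent ℝ (fun p : Set.extremePoints ℝ F => (p : Fin d → ℝ))

/-- A polytope is smooth if the vertices of each facet form a ℤ-basis of `ℤ^d`. -/
def SmoothPoly {d : ℕ} (Q : Set (Fin d → ℝ)) : Prop :=
  ∀ F : Set (Fin d → ℝ), IsFacet Q F →
    ∃ b : Module.Basis (Fin d) ℤ (Fin d → ℤ),
      (Set.range fun i => fun k => ((b i k : ℤ) : ℝ)) = Set.extremePoints ℝ F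

/-- A maximal chain `0̂ = c 0 < c 1 < ⋯ < c m = 1̂` of `P̂` (of length `m`). -/
def IsMaxChainHat {d : ℕ} (P : PartialOrder (Fin d)) {m : ℕ} (c : Fin (m + 1) → HatP d) : Prop :=
  c 0 = hatBot d ∧ c (Fin.last m) = hatTop d ∧
    ∀ j : Fin m, IsCover P (c j.castSucc) (c j.succ)

/-- `P` is pure: all maximal chains of `P̂` have the same length. -/
def PureP {d : ℕ} (P : PartialOrder (Fin d)) : Prop :=
  ∀ (m m' : ℕ) (c : Fin (m + 1) → HatP d) (c' : Fin (m' + 1) → HatP d),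
    IsMaxChainHat P c → IsMaxChainHat P c' → m = m'
-- my lemmas
section Aux
variable {d : ℕ} (P : PartialOrder (Fin d))

lemma hatLE_trans : ∀ a b c : HatP d, hatLE P a b → hatLE P b c → hatLE P a c := by
  rintro (_|_|a) (_|_|b) (_|_|c) h1 h2 <;> simp_all [hatLE]
  exact P.le_trans _ _ _ h1 h2

lemma hatLE_antisymm : ∀ a b : HatP d, hatLE P a b → hatLE P b a → a = b := by
  rintro (_|_|a) (_|_|b) h1 h2 <;> simp_all [hatLE]
  exact P.le_antisymm _ _ h1 h2

lemma hatLT_trans {a b c : HatP d} (h1 : hatLT P a b) (h2 : hatLT P b c) : hatLT P a c := by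
  refine ⟨hatLE_trans P a b c h1.1 h2.1, fun h => ?_⟩
  subst h
  exact h2.2 (hatLE_antisymm P _ _ h2.1 h1.1)

lemma hatLE_top : ∀ a : HatP d, hatLE P a (hatTop d) := by
  rintro (_|_|a) <;> trivial

lemma edge_form {a b : HatP d} (h : IsCover P a b) :
    (a = none ∧ b = some none) ∨
    (∃ i, a = some (some i) ∧ b = some none) ∨
    (∃ j, a = none ∧ b = some (some j)) ∨
    (∃ i j, i ≠ j ∧ P.le i j ∧ a = some (some i) ∧ b = some (some j)) := by
  obtain ⟨⟨hle, hne⟩, -⟩ := h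
  match a, b with
  | none, none => exact absurd rfl hne
  | none, some none => exact Or.inl ⟨rfl, rfl⟩
  | none, some (some j) => exact Or.inr (Or.inr (Or.inl ⟨j, rfl, rfl⟩))
  | some _, none => exact absurd hle (by simp [hatLE])
  | some none, some none => exact absurd rfl hne
  | some none, some (some _) => exact absurd hle (by simp [hatLE])
  | some (some i), some none => exact Or.inr (Or.inl ⟨i, rfl, rfl⟩)
  | some (some i), some (some j) =>
      exact Or.inr (Or.inr (Or.inr ⟨i, j, fun hij => hne (by rw [hij]), hle, rfl, rfl⟩))

lemma hull_bound {f : (Fin d → ℝ) → ℝ} (hf : IsLinearMap ℝ f)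
    (h : ∀ v ∈ edgeVecs P, f v ≤ 1) : ∀ x ∈ QPoly P, f x ≤ 1 := fun _x hx =>
  convexHull_min h (convex_halfSpace_le hf 1) hx

end Aux
section Aux2
variable {d : ℕ} (P : PartialOrder (Fin d))

lemma exists_min : ∀ (n : ℕ) (S : Finset (HatP d)), S.card ≤ n → S.Nonempty →
    ∃ b ∈ S, ∀ z ∈ S, ¬ hatLT P z b := by
  intro n
  induction n with
  | zero =>
    intro S hcard hne
    rw [Nat.le_zero, Finset.card_eq_zero] at hcard
    simp [hcard] at hne
  | succ n ih =>
    intro S hcard hne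
    obtain ⟨b0, hb0⟩ := hne
    set T := S.filter (fun z => hatLT P z b0) with hTdef
    by_cases hT : T.Nonempty
    · have hb0T : b0 ∉ T := by
        simp only [hTdef, Finset.mem_filter]
        rintro ⟨-, h, hne'⟩
        exact hne' rfl
      have hTcard : T.card ≤ n := by
        have h1 : T ⊆ S.erase b0 := by
          intro z hz
          rw [Finset.mem_erase]
          rcases Finset.mem_filter.1 hz with ⟨hzS, hlt⟩
          exact ⟨hlt.2, hzS⟩
        have := Finset.card_le_card h1
        have h2 := Finset.card_erase_of_mem hb0
        omega
      obtain ⟨b, hbT, hmin⟩ := ih T hTcard hT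
      have hbb0 : hatLT P b b0 := (Finset.mem_filter.1 hbT).2
      refine ⟨b, (Finset.mem_filter.1 hbT).1, fun z hz hlt => ?_⟩
      exact hmin z (Finset.mem_filter.2 ⟨hz, hatLT_trans P hlt hbb0⟩) hlt
    · exact ⟨b0, hb0, fun z hz hlt => hT ⟨z, Finset.mem_filter.2 ⟨hz, hlt⟩⟩⟩

lemma chain_to_top : ∀ (n : ℕ) (a : HatP d),
    (Finset.univ.filter (fun z => hatLT P a z)).card ≤ n →
    ∃ l : List (Fin d → ℝ), (∀ v ∈ l, v ∈ edgeVecs P) ∧ l.sum = chi a ∧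
      (a ≠ hatTop d → l ≠ []) := by
  intro n
  induction n with
  | zero =>
    intro a hcard
    by_cases ha : a = hatTop d
    · exact ⟨[], by simp, by simp [ha, hatTop, chi], by tauto⟩
    · exfalso
      have : hatTop d ∈ Finset.univ.filter (fun z => hatLT P a z) := by
        refine Finset.mem_filter.2 ⟨Finset.mem_univ _, hatLE_top P a, ha⟩
      rw [Nat.le_zero, Finset.card_eq_zero] at hcard
      simp [hcard] at this
  | succ n ih =>
    intro a hcard
    by_cases ha : a = hatTop d
    · exact ⟨[], by simp, by simp [ha, hatTop, chi], by tauto⟩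
    · set S := Finset.univ.filter (fun z => hatLT P a z) with hSdef
      have hSne : S.Nonempty :=
        ⟨hatTop d, Finset.mem_filter.2 ⟨Finset.mem_univ _, hatLE_top P a, ha⟩⟩
      obtain ⟨b, hbS, hmin⟩ := exists_min P S.card S le_rfl hSne
      have hab : hatLT P a b := (Finset.mem_filter.1 hbS).2
      have hcov : IsCover P a b := by
        refine ⟨hab, fun z ⟨h1, h2⟩ => ?_⟩
        exact hmin z (Finset.mem_filter.2 ⟨Finset.mem_univ _, h1⟩) h2
      have hsub : (Finset.univ.filter (fun z => hatLT P b z)) ⊆ S.erase b := by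
        intro z hz
        rcases Finset.mem_filter.1 hz with ⟨-, hlt⟩
        refine Finset.mem_erase.2 ⟨fun h => ?_, Finset.mem_filter.2 ⟨Finset.mem_univ _, hatLT_trans P hab hlt⟩⟩
        subst h; exact hlt.2 rfl
      have hcard' : (Finset.univ.filter (fun z => hatLT P b z)).card ≤ n := by
        have h1 := Finset.card_le_card hsub
        have h2 := Finset.card_erase_of_mem hbS
        omega
      obtain ⟨l, hl1, hl2, -⟩ := ih b hcard'
      refine ⟨rho a b :: l, ?_, ?_, by simp⟩
      · intro v hv
        rcases List.mem_cons.1 hv with h | h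
        · exact h ▸ ⟨a, b, hcov, rfl⟩
        · exact hl1 v h
      · simp [List.sum_cons, hl2, rho]

lemma zero_mem_QPoly : (0 : Fin d → ℝ) ∈ QPoly P := by
  obtain ⟨l, hl1, hl2, hl3⟩ := chain_to_top P (Finset.univ.filter (fun z => hatLT P (hatBot d) z)).card (hatBot d) le_rfl
  have hne : l ≠ [] := hl3 (by simp [hatBot, hatTop])
  have hlen : 0 < l.length := List.length_pos_iff.2 hne
  have h0 : (0 : Fin d → ℝ) = Finset.univ.centerMass (fun _ : Fin l.length => (1:ℝ)) (fun i => l[i.1]) := by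
    rw [Finset.centerMass]
    simp only [one_smul, Finset.sum_const, Finset.card_univ, Fintype.card_fin, nsmul_eq_mul, mul_one]
    rw [Fin.sum_univ_getElem]  -- maybe name differs
    rw [hl2]
    simp [hatBot, chi]
  rw [h0]
  exact Finset.centerMass_mem_convexHull _ (fun _ _ => zero_le_one) (by simp [hlen]) (fun i _ => hl1 _ (l.get_mem _))
end Aux2
section Aux3
variable {d : ℕ} (P : PartialOrder (Fin d))

lemma sum_chi (S : Finset (Fin d)) : ∀ c : HatP d,
    0 ≤ ∑ k ∈ S, chi c k ∧ ∑ k ∈ S, chi c k ≤ 1 := by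
  rintro (_|_|i) <;> simp [chi] <;> split_ifs <;> norm_num

lemma qpoly_sum_le (S : Finset (Fin d)) {x : Fin d → ℝ} (hx : x ∈ QPoly P) :
    ∑ k ∈ S, x k ≤ 1 ∧ -1 ≤ ∑ k ∈ S, x k := by
  have hf : IsLinearMap ℝ (fun x : Fin d → ℝ => ∑ k ∈ S, x k) := by
    constructor <;> intros <;> simp [Finset.sum_add_distrib, Finset.mul_sum]
  have hg : IsLinearMap ℝ (fun x : Fin d → ℝ => -∑ k ∈ S, x k) := by
    constructor <;> intros <;> simp [Finset.sum_add_distrib, Finset.mul_sum] <;> ring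
  constructor
  · refine hull_bound P hf (fun v hv => ?_) x hx
    obtain ⟨a, b, -, rfl⟩ := hv
    have ha := sum_chi S a; have hb := sum_chi S b
    simp only [rho, Pi.sub_apply, Finset.sum_sub_distrib]
    linarith
  · have := hull_bound P hg (fun v hv => ?_) x hx
    · linarith
    obtain ⟨a, b, -, rfl⟩ := hv
    have ha := sum_chi S a; have hb := sum_chi S b
    simp only [rho, Pi.sub_apply, Finset.sum_sub_distrib]
    linarith
end Aux3
section Aux4
variable {d : ℕ} (P : PartialOrder (Fin d))

lemma sum_if (i : Fin d) : ∑ k : Fin d, (if k = i then (1:ℝ) else 0) = 1 := by simp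

lemma lin_aux (c : ℝ) (x : Fin d → ℝ) : ∑ k : Fin d, c * x k = c * ∑ k : Fin d, x k :=
  (Finset.mul_sum _ _ _).symm

lemma cover_top (i : Fin d) (hx : rho (some (some i) : HatP d) (some none) ∈ QPoly P) :
    IsCover P (some (some i)) (some none) := by
  by_contra h
  have hf : IsLinearMap ℝ (fun x : Fin d → ℝ => x i + ∑ k, x k) := by
    constructor <;> intros <;>
      simp only [Pi.add_apply, Pi.smul_apply, smul_eq_mul, Finset.sum_add_distrib, lin_aux] <;> ring
  have hb := hull_bound P hf (fun v hv => ?_) _ hx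
  · simp only [rho, chi, Pi.sub_apply, Pi.zero_apply, Finset.sum_sub_distrib, sum_if,
      Finset.sum_const_zero, if_pos rfl] at hb
    norm_num at hb
  obtain ⟨a, b, hcov, rfl⟩ := hv
  rcases edge_form P hcov with ⟨rfl, rfl⟩ | ⟨i', rfl, rfl⟩ | ⟨j', rfl, rfl⟩ | ⟨i', j', hij, -, rfl, rfl⟩
  · simp [rho, chi]
  · have hii : i' ≠ i := fun hii => h (hii ▸ hcov)
    simp only [rho, chi, Pi.sub_apply, Pi.zero_apply, Finset.sum_sub_distrib, sum_if,
      Finset.sum_const_zero]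
    simp [Ne.symm hii]
  · simp only [rho, chi, Pi.sub_apply, Pi.zero_apply, Finset.sum_sub_distrib, sum_if,
      Finset.sum_const_zero]
    split_ifs <;> norm_num
  · simp only [rho, chi, Pi.sub_apply, Finset.sum_sub_distrib, sum_if]
    split_ifs <;> norm_num

lemma cover_bot (j : Fin d) (hx : rho (none : HatP d) (some (some j)) ∈ QPoly P) :
    IsCover P none (some (some j)) := by
  by_contra h
  have hf : IsLinearMap ℝ (fun x : Fin d → ℝ => -x j - ∑ k, x k) := by
    constructor <;> intros <;>
      simp only [Pi.add_apply, Pi.smul_apply, smul_eq_mul, Finset.sum_add_distrib, lin_aux] <;> ring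
  have hb := hull_bound P hf (fun v hv => ?_) _ hx
  · simp only [rho, chi, Pi.sub_apply, Pi.zero_apply, Finset.sum_sub_distrib, sum_if,
      Finset.sum_const_zero, if_pos rfl] at hb
    norm_num at hb
  obtain ⟨a, b, hcov, rfl⟩ := hv
  rcases edge_form P hcov with ⟨rfl, rfl⟩ | ⟨i', rfl, rfl⟩ | ⟨j', rfl, rfl⟩ | ⟨i', j', hij, -, rfl, rfl⟩
  · simp [rho, chi]
  · simp only [rho, chi, Pi.sub_apply, Pi.zero_apply, Finset.sum_sub_distrib, sum_if,
      Finset.sum_const_zero]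
    split_ifs <;> norm_num
  · have hjj : j' ≠ j := fun hjj => h (hjj ▸ hcov)
    simp only [rho, chi, Pi.sub_apply, Pi.zero_apply, Finset.sum_sub_distrib, sum_if,
      Finset.sum_const_zero]
    simp [Ne.symm hjj]
  · simp only [rho, chi, Pi.sub_apply, Finset.sum_sub_distrib, sum_if]
    split_ifs <;> norm_num

lemma cover_mid (i j : Fin d) (hij : i ≠ j)
    (hx : rho (some (some i) : HatP d) (some (some j)) ∈ QPoly P) :
    IsCover P (some (some i)) (some (some j)) := by
  by_contra h
  have hf : IsLinearMap ℝ (fun x : Fin d → ℝ => x i - x j) := by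
    constructor <;> intros <;> simp <;> ring
  have hb := hull_bound P hf (fun v hv => ?_) _ hx
  · simp [rho, chi, hij, Ne.symm hij] at hb
    linarith
  obtain ⟨a, b, hcov, rfl⟩ := hv
  rcases edge_form P hcov with ⟨rfl, rfl⟩ | ⟨i', rfl, rfl⟩ | ⟨j', rfl, rfl⟩ | ⟨i', j', hij', -, rfl, rfl⟩
  · simp [rho, chi]
  · simp only [rho, chi, Pi.sub_apply, Pi.zero_apply]
    split_ifs <;> norm_num
  · simp only [rho, chi, Pi.sub_apply, Pi.zero_apply]
    split_ifs <;> norm_num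
  · have hne : ¬(i' = i ∧ j' = j) := by
      rintro ⟨rfl, rfl⟩; exact h hcov
    simp only [rho, chi, Pi.sub_apply]
    by_cases h1 : i = i' <;> by_cases h2 : j = j' <;>
      simp_all <;> split_ifs <;> simp_all <;> norm_num
end Aux4
section Main
variable {d : ℕ}

lemma part1 (P : PartialOrder (Fin d)) :
    ∀ x ∈ QPoly P, IsIntegralPt x → x ≠ 0 → x ∈ edgeVecs P := by
  intro x hx hint hne
  choose z hz using hint
  have hcoord : ∀ k, z k ≤ 1 ∧ -1 ≤ z k := by
    intro k
    have h := qpoly_sum_le P {k} hx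
    rw [Finset.sum_singleton, hz k] at h
    exact ⟨by exact_mod_cast h.1, by exact_mod_cast h.2⟩
  set Pos := Finset.univ.filter (fun k => 0 < z k) with hPosdef
  set Neg := Finset.univ.filter (fun k => z k < 0) with hNegdef
  have hPsum : ∑ k ∈ Pos, z k ≤ 1 := by
    have h := (qpoly_sum_le P Pos hx).1
    have heq : ((∑ k ∈ Pos, z k : ℤ) : ℝ) = ∑ k ∈ Pos, x k := by
      push_cast
      exact Finset.sum_congr rfl (fun k _ => (hz k).symm)
    rw [← heq] at h
    exact_mod_cast h
  have hNsum : (-1 : ℤ) ≤ ∑ k ∈ Neg, z k := by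
    have h := (qpoly_sum_le P Neg hx).2
    have heq : ((∑ k ∈ Neg, z k : ℤ) : ℝ) = ∑ k ∈ Neg, x k := by
      push_cast
      exact Finset.sum_congr rfl (fun k _ => (hz k).symm)
    rw [← heq] at h
    exact_mod_cast h
  have hPos1 : ∀ k ∈ Pos, z k = 1 := by
    intro k hk
    have h1 := (hcoord k).1
    have h2 := (Finset.mem_filter.1 hk).2
    omega
  have hNeg1 : ∀ k ∈ Neg, z k = -1 := by
    intro k hk
    have h1 := (hcoord k).2
    have h2 := (Finset.mem_filter.1 hk).2
    omega
  have hPcard : Pos.card ≤ 1 := by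
    have heq : ∑ k ∈ Pos, z k = Pos.card := by
      rw [Finset.sum_congr rfl hPos1]
      simp
    omega
  have hNcard : Neg.card ≤ 1 := by
    have heq : ∑ k ∈ Neg, z k = -(Neg.card : ℤ) := by
      rw [Finset.sum_congr rfl hNeg1]
      simp
    omega
  have hzero : ∀ k, k ∉ Pos → k ∉ Neg → z k = 0 := by
    intro k h1 h2
    simp only [hPosdef, hNegdef, Finset.mem_filter, Finset.mem_univ, true_and, not_lt] at h1 h2
    omega
  have hP01 : Pos.card = 0 ∨ Pos.card = 1 := by omega
  have hN01 : Neg.card = 0 ∨ Neg.card = 1 := by omega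
  rcases hP01 with hP0 | hP1
  · rw [Finset.card_eq_zero] at hP0
    rcases hN01 with hN0 | hN1
    · exfalso
      apply hne
      funext k
      rw [Finset.card_eq_zero] at hN0
      have := hzero k (by simp [hP0]) (by simp [hN0])
      rw [hz k, this]
      simp
    · obtain ⟨j, hj⟩ := Finset.card_eq_one.1 hN1
      have hxval : x = rho (none : HatP d) (some (some j)) := by
        funext k
        rw [hz k]
        simp only [rho, chi, Pi.sub_apply, Pi.zero_apply, zero_sub]
        by_cases hkj : k = j
        · subst hkj
          have : k ∈ Neg := by simp [hj]
          rw [hNeg1 k this]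
          simp
        · have h1 : k ∉ Pos := by simp [hP0]
          have h2 : k ∉ Neg := by simp [hj, hkj]
          rw [hzero k h1 h2]
          simp [hkj]
      have hcov := cover_bot P j (hxval ▸ hx)
      exact ⟨none, some (some j), hcov, hxval⟩
  · obtain ⟨i, hi⟩ := Finset.card_eq_one.1 hP1
    have hiPos : i ∈ Pos := by simp [hi]
    rcases hN01 with hN0 | hN1
    · rw [Finset.card_eq_zero] at hN0
      have hxval : x = rho (some (some i) : HatP d) (some none) := by
        funext k
        rw [hz k]
        simp only [rho, chi, Pi.sub_apply, Pi.zero_apply, sub_zero]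
        by_cases hki : k = i
        · subst hki
          rw [hPos1 k hiPos]
          simp
        · have h1 : k ∉ Pos := by simp [hi, hki]
          have h2 : k ∉ Neg := by simp [hN0]
          rw [hzero k h1 h2]
          simp [hki]
      have hcov := cover_top P i (hxval ▸ hx)
      exact ⟨some (some i), some none, hcov, hxval⟩
    · obtain ⟨j, hj⟩ := Finset.card_eq_one.1 hN1
      have hjNeg : j ∈ Neg := by simp [hj]
      have hij : i ≠ j := by
        intro hh
        have h1 := (Finset.mem_filter.1 hiPos).2
        have h2 := (Finset.mem_filter.1 hjNeg).2
        rw [hh] at h1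
        omega
      have hxval : x = rho (some (some i) : HatP d) (some (some j)) := by
        funext k
        rw [hz k]
        simp only [rho, chi, Pi.sub_apply]
        by_cases hki : k = i
        · subst hki
          rw [hPos1 k hiPos]
          simp [hij]
        · by_cases hkj : k = j
          · subst hkj
            rw [hNeg1 k hjNeg]
            simp [hki]
          · have h1 : k ∉ Pos := by simp [hi, hki]
            have h2 : k ∉ Neg := by simp [hj, hkj]
            rw [hzero k h1 h2]
            simp [hki, hkj]
      have hcov := cover_mid P i j hij (hxval ▸ hx)
      exact ⟨some (some i), some (some j), hcov, hxval⟩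

/-- every integer point of `Q_P` other than the origin is `ρ(e)` for some
edge `e` of `P̂`; the set of integer points of `Q_P` is `{0} ∪ {ρ(e) : e edge of P̂}`. -/
theorem stmt2 (d : ℕ) (hd : 1 ≤ d) (P : PartialOrder (Fin d)) :
    (∀ x ∈ QPoly P, IsIntegralPt x → x ≠ 0 → x ∈ edgeVecs P) ∧
    {x ∈ QPoly P | IsIntegralPt x} = insert (0 : Fin d → ℝ) (edgeVecs P) := by
  have hchi : ∀ (a : HatP d) (k : Fin d), chi a k = 0 ∨ chi a k = 1 := by
    rintro (_|_|i) k <;> simp [chi] <;> tauto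
  have hint_edge : ∀ v ∈ edgeVecs P, IsIntegralPt v := by
    rintro v ⟨a, b, -, rfl⟩ k
    rcases hchi a k with h1 | h1 <;> rcases hchi b k with h2 | h2
    · exact ⟨0, by simp [rho, h1, h2]⟩
    · exact ⟨-1, by simp [rho, h1, h2]⟩
    · exact ⟨1, by simp [rho, h1, h2]⟩
    · exact ⟨0, by simp [rho, h1, h2]⟩
  refine ⟨part1 P, Set.ext fun x => ⟨fun ⟨hQ, hint⟩ => ?_, fun h => ?_⟩⟩
  · by_cases hx0 : x = 0
    · exact Set.mem_insert_iff.2 (Or.inl hx0)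
    · exact Set.mem_insert_iff.2 (Or.inr (part1 P x hQ hint hx0))
  · rcases Set.mem_insert_iff.1 h with rfl | hx
    · exact ⟨zero_mem_QPoly P, fun k => ⟨0, by simp⟩⟩
    · exact ⟨subset_convexHull ℝ _ hx, hint_edge x hx⟩
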